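/- Define f(s) = 1 + [(2-b)(s-1)² + (2-2b)(s-1)]/(2s²) - s + b·ln(s) for s ∈ (0,1], where b > 1 is a constant. Then f(1) = 0 and f'(s) = -(b-s)(1-s²)/s³ < 0 for all s ∈ (0,1); consequently f(s) > 0 for all s ∈ (0,1). -/

import Mathlib

/-- For `b > 1`, the function
`f(s) = 1 + [(2-b)(s-1)² + (2-2b)(s-1)]/(2s²) - s + b·ln s` on `(0,1]`
satisfies `f(1) = 0`, `f'(s) = -(b-s)(1-s²)/s³ < 0` on `(0,1)`, and
consequently `f(s) > 0` on `(0,1)`. -/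
theorem stmt_7 (b : ℝ) (hb : 1 < b)
    (f : ℝ → ℝ)
    (hf : ∀ s : ℝ, f s = 1 + ((2 - b)*(s - 1)^2 + (2 - 2*b)*(s - 1))/(2*s^2)
      - s + b * Real.log s) :
    f 1 = 0 ∧
    (∀ s ∈ Set.Ioo (0:ℝ) 1,
      HasDerivAt f (-((b - s)*(1 - s^2)/s^3)) s ∧ -((b - s)*(1 - s^2)/s^3) < 0) ∧
    (∀ s ∈ Set.Ioo (0:ℝ) 1, 0 < f s) := by
  have hfe : f = fun s => 1 + ((2 - b)*(s - 1)^2 + (2 - 2*b)*(s - 1))/(2*s^2)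
      - s + b * Real.log s := funext hf
  -- raw derivative at any s ≠ 0
  have hder : ∀ s : ℝ, s ≠ 0 →
      HasDerivAt f (((((2-b)*(2*(s-1)*1) + (2-2*b)*1) * (2*s^2)
          - ((2 - b)*(s - 1)^2 + (2 - 2*b)*(s - 1)) * (2*(2*s))) / (2*s^2)^2
          - 1) + b * s⁻¹) s := by
    intro s hs0
    rw [hfe]
    have h2s : (2*s^2) ≠ 0 := by positivity
    have hnum : HasDerivAt (fun s : ℝ => (2 - b)*(s - 1)^2 + (2 - 2*b)*(s - 1))
        ((2-b)*(2*(s-1)*1) + (2-2*b)*1) s := by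
      have h1 : HasDerivAt (fun s : ℝ => s - 1) 1 s :=
        (hasDerivAt_id s).sub_const 1
      exact (((h1.pow 2).const_mul (2-b)).add (h1.const_mul (2-2*b))).congr_deriv (by norm_num)
    have hden : HasDerivAt (fun s : ℝ => 2*s^2) (2*(2*s)) s := by
      simpa using ((hasDerivAt_pow 2 s).const_mul 2)
    have hdiv := hnum.div hden h2s
    have hlog := (Real.hasDerivAt_log hs0).const_mul b
    exact (((hdiv.const_add 1).sub (hasDerivAt_id s)).add hlog)
  have key : ∀ s ∈ Set.Ioo (0:ℝ) 1,
      HasDerivAt f (-((b - s)*(1 - s^2)/s^3)) s := by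
    intro s hs
    have hs0 : s ≠ 0 := ne_of_gt hs.1
    have := hder s hs0
    convert this using 1
    field_simp
    ring
  have hneg : ∀ s ∈ Set.Ioo (0:ℝ) 1, -((b - s)*(1 - s^2)/s^3) < 0 := by
    intro s hs
    have h1 : 0 < b - s := by nlinarith [hs.2]
    have h2 : 0 < 1 - s^2 := by nlinarith [hs.1, hs.2]
    have h3 : 0 < s^3 := pow_pos hs.1 3
    have : 0 < (b - s)*(1 - s^2)/s^3 := div_pos (mul_pos h1 h2) h3
    linarith
  have hf1 : f 1 = 0 := by
    rw [hf]; simp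
  refine ⟨hf1, fun s hs => ⟨key s hs, hneg s hs⟩, ?_⟩
  -- positivity via strict antitonicity on Ioc 0 1
  have hcont : ContinuousOn f (Set.Ioc 0 1) := fun s hs =>
    ((hder s (ne_of_gt hs.1)).continuousAt).continuousWithinAt
  have hanti : StrictAntiOn f (Set.Ioc 0 1) := by
    apply strictAntiOn_of_deriv_neg (convex_Ioc 0 1) hcont
    intro s hs
    rw [interior_Ioc] at hs
    rw [(key s hs).deriv]
    exact hneg s hs
  intro s hs
  have := hanti (Set.mem_Ioc.2 ⟨hs.1, le_of_lt hs.2⟩) (Set.mem_Ioc.2 ⟨one_pos, le_refl 1⟩) hs.2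
  rw [hf1] at this
  exact this
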